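/- Let ε > 0. In the extended Battle of the Sexes game specified below, the mixed-strategy profile in which Ann plays B_together with probability 2/3 and O_together with probability 1/3, and Bob plays B_together with probability 1/3 and O_together with probability 2/3, is a Nash equilibrium; both players' mixed strategies are supported on the 'together' strategies (so the coalition {Ann, Bob} forms with probability 1), and each player's expected payoff equals 2/3 + ε. -/

import Mathlib

/-- Strategies in the extended Battle of the Sexes: Boxing/Opera,
alone/together. -/
inductive BS where
  | Ba  -- Boxing, alone
  | Oa  -- Opera, alone
  | Bt  -- Boxing, together
  | Ot  -- Opera, together
deriving DecidableEq

instance : Fintype BS where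
  elems := {BS.Ba, BS.Oa, BS.Bt, BS.Ot}
  complete := by intro x; cases x <;> simp

open BS

/-- Whether the strategy chooses Boxing. -/
def box : BS → Bool
  | Ba => true
  | Bt => true
  | _ => false

/-- Whether the strategy is a 'together' strategy. -/
def tog : BS → Bool
  | Bt => true
  | Ot => true
  | _ => false

/-- Ann's payoff: 2 if both Box, 1 if both Opera, 0 otherwise; plus `ε` if the
coalition forms (both chose 'together'). -/
def uA (ε : ℝ) (s1 s2 : BS) : ℝ :=
  (if box s1 = box s2 then (if box s1 then 2 else 1) else 0) +
    (if tog s1 = true ∧ tog s2 = true then ε else 0)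

/-- Bob's payoff: 1 if both Box, 2 if both Opera, 0 otherwise; plus `ε` if the
coalition forms. -/
def uB (ε : ℝ) (s1 s2 : BS) : ℝ :=
  (if box s1 = box s2 then (if box s1 then 1 else 2) else 0) +
    (if tog s1 = true ∧ tog s2 = true then ε else 0)

/-- A mixed strategy: a probability vector over the four pure strategies. -/
def IsMix (σ : BS → ℝ) : Prop := (∀ a, 0 ≤ σ a) ∧ (∑ a, σ a) = 1

/-- Expected payoff of the row player's payoff function `u` under the product
distribution of Ann's strategy `σ1` and Bob's strategy `σ2`. -/
noncomputable def EU (u : BS → BS → ℝ) (σ1 σ2 : BS → ℝ) : ℝ :=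
  ∑ a, ∑ b, u a b * σ1 a * σ2 b

/-- Ann's mixed strategy: `B_together` with probability `2/3`, `O_together`
with probability `1/3`. -/
noncomputable def σA : BS → ℝ
  | Bt => 2 / 3
  | Ot => 1 / 3
  | _ => 0

/-- Bob's mixed strategy: `B_together` with probability `1/3`, `O_together`
with probability `2/3`. -/
noncomputable def σB : BS → ℝ
  | Bt => 1 / 3
  | Ot => 2 / 3
  | _ => 0

lemma sum4 (f : BS → ℝ) : ∑ a, f a = f Ba + f Oa + f Bt + f Ot := by
  rw [show (Finset.univ : Finset BS) = {Ba, Oa, Bt, Ot} from rfl]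
  simp [Finset.sum_insert]
  ring

/-- For `ε > 0`, the profile `(σA, σB)` (supported on the 'together'
strategies) is a Nash equilibrium of the extended Battle of the Sexes; the
coalition `{Ann, Bob}` forms with probability 1 and each player's expected
payoff is `2/3 + ε`. -/
theorem extended_bos_mixed_equilibrium (ε : ℝ) (hε : 0 < ε) :
    IsMix σA ∧ IsMix σB ∧
    (∀ τ, IsMix τ → EU (uA ε) τ σB ≤ EU (uA ε) σA σB) ∧
    (∀ τ, IsMix τ → EU (uB ε) σA τ ≤ EU (uB ε) σA σB) ∧
    (∑ a, ∑ b, (if tog a = true ∧ tog b = true then σA a * σB b else 0)) = 1 ∧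
    EU (uA ε) σA σB = 2 / 3 + ε ∧
    EU (uB ε) σA σB = 2 / 3 + ε := by

  have hA : IsMix σA := by
    constructor
    · intro a; cases a <;> norm_num [σA]
    · rw [sum4]; norm_num [σA]
  have hB : IsMix σB := by
    constructor
    · intro a; cases a <;> norm_num [σB]
    · rw [sum4]; norm_num [σB]
  refine ⟨hA, hB, ?_, ?_, ?_, ?_, ?_⟩
  · intro τ hτ
    obtain ⟨hpos, hsum⟩ := hτ
    rw [sum4] at hsum
    have h0 := hpos Ba; have h1 := hpos Oa; have h2 := hpos Bt; have h3 := hpos Ot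
    simp only [EU, sum4, uA, σA, σB, box, tog]
    norm_num
    nlinarith [hε, h0, h1, h2, h3]
  · intro τ hτ
    obtain ⟨hpos, hsum⟩ := hτ
    rw [sum4] at hsum
    have h0 := hpos Ba; have h1 := hpos Oa; have h2 := hpos Bt; have h3 := hpos Ot
    simp only [EU, sum4, uB, σA, σB, box, tog]
    norm_num
    nlinarith [hε, h0, h1, h2, h3]
  · simp only [sum4, σA, σB, tog]
    norm_num
  · simp only [EU, sum4, uA, σA, σB, box, tog]
    norm_num
    ring
  · simp only [EU, sum4, uB, σA, σB, box, tog]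
    norm_num
    ring
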